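/- Let X be a nonempty closed bounded subset of ℝ, and let ≈ be an equivalence relation on X whose equivalence classes are all closed and order-convex (with respect to the order inherited from ℝ). If there is more than one equivalence class, and ≈ contains the successor relation (i.e., x ≈ y whenever there is no z ∈ X strictly between x and y), then uncountably many equivalence classes are singletons. -/
import Mathlib


/-- If a closed bounded nonempty subset of ℝ carries an equivalence relation with
closed, order-convex classes, containing the successor relation, and with at least
two classes, then uncountably many classes are singletons. -/
theorem stmt10 (X : Set ℝ) (hne : X.Nonempty) (hcl : IsClosed X)
    (hbd : Bornology.IsBounded X)
    (r : ℝ → ℝ → Prop)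
    (hrefl : ∀ x ∈ X, r x x)
    (hsymm : ∀ x ∈ X, ∀ y ∈ X, r x y → r y x)
    (htrans : ∀ x ∈ X, ∀ y ∈ X, ∀ z ∈ X, r x y → r y z → r x z)
    (hclosed : ∀ x ∈ X, IsClosed {y : ℝ | y ∈ X ∧ r y x})
    (hconv : ∀ x ∈ X, ∀ a ∈ X, ∀ b ∈ X, ∀ z ∈ X,
      r a x → r b x → a ≤ z → z ≤ b → r z x)
    (hsucc : ∀ x ∈ X, ∀ y ∈ X,
      (∀ z ∈ X, ¬ (x < z ∧ z < y) ∧ ¬ (y < z ∧ z < x)) → r x y)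
    (htwo : ∃ x ∈ X, ∃ y ∈ X, ¬ r x y) :
    ¬ Set.Countable {x : ℝ | x ∈ X ∧ ∀ y ∈ X, r y x → y = x} := by
  intro hS
  obtain ⟨hXbb, hXba⟩ := isBounded_iff_bddBelow_bddAbove.mp hbd
  set cls : ℝ → Set ℝ := fun x => {y : ℝ | y ∈ X ∧ r y x} with hclsdef
  have hclsub : ∀ x, cls x ⊆ X := fun x y hy => hy.1
  have hclne : ∀ x ∈ X, (cls x).Nonempty := fun x hx => ⟨x, hx, hrefl x hx⟩
  have hbb : ∀ x, BddBelow (cls x) := fun x => hXbb.mono (hclsub x)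
  have hba : ∀ x, BddAbove (cls x) := fun x => hXba.mono (hclsub x)
  have hinfmem : ∀ x ∈ X, sInf (cls x) ∈ cls x := fun x hx =>
    (hclosed x hx).csInf_mem (hclne x hx) (hbb x)
  have hsupmem : ∀ x ∈ X, sSup (cls x) ∈ cls x := fun x hx =>
    (hclosed x hx).csSup_mem (hclne x hx) (hba x)
  -- class equality
  have hclseq : ∀ x ∈ X, ∀ y, y ∈ cls x → cls y = cls x := by
    intro x hx y hy
    ext z
    constructor
    · intro hz
      exact ⟨hz.1, htrans z hz.1 y hy.1 x hx hz.2 hy.2⟩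
    · intro hz
      exact ⟨hz.1, htrans z hz.1 x hx y hy.1 hz.2 (hsymm y hy.1 x hx hy.2)⟩
  -- the set of class minima
  set M : Set ℝ := {x | x ∈ X ∧ sInf (cls x) = x} with hMdef
  have hMX : ∀ m ∈ M, m ∈ X := fun m hm => hm.1
  have hMself : ∀ m ∈ M, m ∈ cls m := fun m hm => ⟨hm.1, hrefl m hm.1⟩
  have hminM : ∀ x ∈ X, sInf (cls x) ∈ M := by
    intro x hx
    have h1 : sInf (cls x) ∈ cls x := hinfmem x hx
    refine ⟨h1.1, ?_⟩
    rw [hclseq x hx _ h1]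
  have hMeq : ∀ m ∈ M, ∀ m' ∈ M, cls m = cls m' → m = m' := by
    intro m hm m' hm' h
    rw [← hm.2, ← hm'.2, h]
  -- squeeze: a point of M between sInf (cls c) and c is sInf (cls c)
  have hsq : ∀ c ∈ X, ∀ m ∈ M, sInf (cls c) ≤ m → m ≤ c → m = sInf (cls c) := by
    intro c hc m hm h1 h2
    have hic := hinfmem c hc
    have hmc : m ∈ cls c :=
      ⟨hm.1, hconv c hc _ hic.1 c hc m hm.1 hic.2 (hrefl c hc) h1 h2⟩
    have := hclseq c hc m hmc
    rw [← hm.2, this]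
  -- order separation: distinct minima have separated classes
  have hord : ∀ m ∈ M, ∀ m' ∈ M, m < m' → sSup (cls m) < m' := by
    intro m hm m' hm' hlt
    by_contra h
    push_neg at h
    have hsup := hsupmem m hm.1
    have hm'c : m' ∈ cls m :=
      ⟨hm'.1, hconv m hm.1 m (hMself m hm).1 _ hsup.1 m' hm'.1 (hrefl m hm.1)
        hsup.2 hlt.le h⟩
    have := hMeq m hm m' hm' (hclseq m hm.1 m' hm'c).symm
    exact absurd this hlt.ne
  -- density of M
  have hdense : ∀ u ∈ M, ∀ v ∈ M, u < v → ∃ w ∈ M, u < w ∧ w < v := by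
    intro u hu v hv huv
    have hbu := hsupmem u hu.1
    have hbuv : sSup (cls u) < v := hord u hu v hv huv
    have hnr : ¬ r (sSup (cls u)) v := by
      intro h
      have h1 : sSup (cls u) ∈ cls v := ⟨hbu.1, h⟩
      have e1 := hclseq v hv.1 _ h1
      have e2 := hclseq u hu.1 _ hbu
      exact absurd (hMeq u hu v hv (e2.symm.trans e1)) huv.ne
    have hz : ∃ z ∈ X, (sSup (cls u) < z ∧ z < v) ∨ (v < z ∧ z < sSup (cls u)) := by
      by_contra h
      push_neg at h
      refine hnr (hsucc _ hbu.1 v hv.1 ?_)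
      intro z hzX
      have h2 := h z hzX
      constructor
      · rintro ⟨hc1, hc2⟩; exact absurd (h2.1 hc1) (not_le.mpr hc2)
      · rintro ⟨hc1, hc2⟩; exact absurd (h2.2 hc1) (not_le.mpr hc2)
    obtain ⟨z, hzX, hzc⟩ := hz
    have hz2 : sSup (cls u) < z ∧ z < v := by
      rcases hzc with h | h
      · exact h
      · exact absurd (h.1.trans (h.2.trans hbuv)) (lt_irrefl v)
    refine ⟨sInf (cls z), hminM z hzX, ?_, ?_⟩
    · by_contra h
      push_neg at h
      have hiz := hinfmem z hzX
      have huz : u ∈ cls z :=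
        ⟨hu.1, hconv z hzX _ hiz.1 z hzX u hu.1 hiz.2 (hrefl z hzX) h
          ((le_csSup (hba u) (hMself u hu)).trans hz2.1.le)⟩
      have : z ∈ cls u := (hclseq z hzX u huz) ▸ ⟨hzX, hrefl z hzX⟩
      exact absurd (le_csSup (hba u) this) (not_le.mpr hz2.1)
    · exact lt_of_le_of_lt (csInf_le (hbb z) ⟨hzX, hrefl z hzX⟩) hz2.2
  -- M is countable
  have hMcount : M.Countable := by
    set B : Set ℝ := {m | m ∈ M ∧ m < sSup (cls m)} with hBdef
    have hBcount : B.Countable := by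
      refine Set.PairwiseDisjoint.countable_of_isOpen
        (s := fun m => Set.Ioo m (sSup (cls m))) ?_ (fun i _ => isOpen_Ioo)
        (fun i hi => Set.nonempty_Ioo.mpr hi.2)
      intro m hm m' hm' hne'
      have key : ∀ p ∈ B, ∀ q ∈ B, p < q →
          Disjoint (Set.Ioo p (sSup (cls p))) (Set.Ioo q (sSup (cls q))) := by
        intro p hp q hq hpq
        have := hord p hp.1 q hq.1 hpq
        refine Set.disjoint_left.mpr ?_
        intro z hz1 hz2
        exact absurd (hz1.2.trans (this.trans hz2.1)) (lt_irrefl z)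
      rcases lt_or_gt_of_ne hne' with h | h
      · exact key m hm m' hm' h
      · exact (key m' hm' m hm h).symm
    refine ((hS.union hBcount).mono ?_)
    intro m hm
    by_cases h : m < sSup (cls m)
    · exact Or.inr ⟨hm, h⟩
    · push_neg at h
      refine Or.inl ⟨hm.1, ?_⟩
      intro y hy hry
      have hyc : y ∈ cls m := ⟨hy, hry⟩
      have h1 : m ≤ y := hm.2 ▸ csInf_le (hbb m) hyc
      have h2 : y ≤ m := (le_csSup (hba m) hyc).trans h
      exact le_antisymm h2 h1
  -- initial pair of distinct elements of M
  obtain ⟨x, hx, y, hy, hxy⟩ := htwo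
  have ha0 : sInf (cls x) ∈ M := hminM x hx
  have hb0 : sInf (cls y) ∈ M := hminM y hy
  have hne0 : sInf (cls x) ≠ sInf (cls y) := by
    intro h
    have e1 := hclseq x hx _ (hinfmem x hx)
    have e2 := hclseq y hy _ (hinfmem y hy)
    have : cls x = cls y := e1.symm.trans (h ▸ e2)
    exact hxy (this ▸ ⟨hx, hrefl x hx⟩ : x ∈ cls y).2
  -- enumeration of M
  obtain ⟨u, hu⟩ := hMcount.exists_eq_range ⟨_, ha0⟩
  have huM : ∀ m ∈ M, ∃ n, u n = m := by
    intro m hm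
    have : m ∈ Set.range u := hu ▸ hm
    obtain ⟨n, hn⟩ := this
    exact ⟨n, hn⟩
  -- the key interval-shrinking step
  have hkey : ∀ (t a b : ℝ), a ∈ M → b ∈ M → a < b →
      ∃ p : ℝ × ℝ, p.1 ∈ M ∧ p.2 ∈ M ∧ a < p.1 ∧ p.1 < p.2 ∧ p.2 < b ∧
        (t ∈ M → t ∉ Set.Icc p.1 p.2) := by
    intro t a b haM hbM hab
    by_cases h : a < t ∧ t < b ∧ t ∈ M
    · obtain ⟨a', ha'M, haa', ha't⟩ := hdense a haM t h.2.2 h.1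
      obtain ⟨b', hb'M, ha'b', hb't⟩ := hdense a' ha'M t h.2.2 ha't
      exact ⟨(a', b'), ha'M, hb'M, haa', ha'b', hb't.trans h.2.1,
        fun _ hIcc => absurd hIcc.2 (not_le.mpr hb't)⟩
    · obtain ⟨a', ha'M, haa', ha'b⟩ := hdense a haM b hbM hab
      obtain ⟨b', hb'M, ha'b', hb'b⟩ := hdense a' ha'M b hbM ha'b
      refine ⟨(a', b'), ha'M, hb'M, haa', ha'b', hb'b, ?_⟩
      intro ht hIcc
      exact h ⟨haa'.trans_le hIcc.1, lt_of_le_of_lt hIcc.2 hb'b, ht⟩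
  -- build the nested sequence
  classical
  let next : ℕ → ℝ × ℝ → ℝ × ℝ := fun n q =>
    if h : q.1 ∈ M ∧ q.2 ∈ M ∧ q.1 < q.2 then
      (hkey (u n) q.1 q.2 h.1 h.2.1 h.2.2).choose
    else q
  have hnext : ∀ n (q : ℝ × ℝ), q.1 ∈ M → q.2 ∈ M → q.1 < q.2 →
      (next n q).1 ∈ M ∧ (next n q).2 ∈ M ∧ q.1 < (next n q).1 ∧
      (next n q).1 < (next n q).2 ∧ (next n q).2 < q.2 ∧
      (u n ∈ M → u n ∉ Set.Icc (next n q).1 (next n q).2) := by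
    intro n q h1 h2 h3
    have hq : q.1 ∈ M ∧ q.2 ∈ M ∧ q.1 < q.2 := ⟨h1, h2, h3⟩
    have : next n q = (hkey (u n) q.1 q.2 hq.1 hq.2.1 hq.2.2).choose := by
      simp only [next, dif_pos hq]
    rw [this]
    exact (hkey (u n) q.1 q.2 hq.1 hq.2.1 hq.2.2).choose_spec
  let init : ℝ × ℝ := if sInf (cls x) < sInf (cls y) then (sInf (cls x), sInf (cls y))
    else (sInf (cls y), sInf (cls x))
  have hinit : init.1 ∈ M ∧ init.2 ∈ M ∧ init.1 < init.2 := by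
    by_cases h : sInf (cls x) < sInf (cls y)
    · simp only [init, if_pos h]; exact ⟨ha0, hb0, h⟩
    · have h' : sInf (cls y) < sInf (cls x) := lt_of_le_of_ne (not_lt.mp h) (Ne.symm hne0)
      simp only [init, if_neg h]; exact ⟨hb0, ha0, h'⟩
  let f : ℕ → ℝ × ℝ := fun n => Nat.rec init (fun k ih => next k ih) n
  have hf0 : f 0 = init := rfl
  have hfs : ∀ n, f (n + 1) = next n (f n) := fun n => rfl
  set a : ℕ → ℝ := fun n => (f n).1 with hadef
  set b : ℕ → ℝ := fun n => (f n).2 with hbdef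
  have hinv : ∀ n, a n ∈ M ∧ b n ∈ M ∧ a n < b n := by
    intro n
    induction n with
    | zero => exact hinit
    | succ k ih =>
      have h := hnext k (f k) ih.1 ih.2.1 ih.2.2
      exact ⟨h.1, h.2.1, h.2.2.2.1⟩
  have hstep : ∀ n, a n < a (n + 1) ∧ b (n + 1) < b n ∧
      (u n ∈ M → u n ∉ Set.Icc (a (n + 1)) (b (n + 1))) := by
    intro n
    have ih := hinv n
    have := hnext n (f n) ih.1 ih.2.1 ih.2.2
    exact ⟨this.2.2.1, this.2.2.2.2.1, this.2.2.2.2.2⟩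
  have hamono : ∀ k l, k ≤ l → a k ≤ a l := by
    intro k l hkl
    induction l with
    | zero => rw [Nat.le_zero.mp hkl]
    | succ j ih =>
      rcases Nat.lt_or_ge k (j + 1) with h | h
      · exact (ih (Nat.lt_succ_iff.mp h)).trans (hstep j).1.le
      · rw [le_antisymm hkl h]
  have hbanti : ∀ k l, k ≤ l → b l ≤ b k := by
    intro k l hkl
    induction l with
    | zero => rw [Nat.le_zero.mp hkl]
    | succ j ih =>
      rcases Nat.lt_or_ge k (j + 1) with h | h
      · exact (hstep j).2.1.le.trans (ih (Nat.lt_succ_iff.mp h))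
      · rw [le_antisymm hkl h]
  have hab : ∀ k n, a k ≤ b n := by
    intro k n
    rcases le_total k n with h | h
    · exact (hamono k n h).trans (hinv n).2.2.le
    · exact (hinv k).2.2.le.trans (hbanti n k h)
  -- the supremum
  set c : ℝ := sSup (Set.range a) with hcdef
  have hrne : (Set.range a).Nonempty := ⟨a 0, 0, rfl⟩
  have hrba : BddAbove (Set.range a) := ⟨b 0, by rintro _ ⟨k, rfl⟩; exact hab k 0⟩
  have hcX : c ∈ X := by
    have h1 : c ∈ closure (Set.range a) := csSup_mem_closure hrne hrba
    have h2 : Set.range a ⊆ X := by rintro _ ⟨k, rfl⟩; exact (hinv k).1.1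
    exact hcl.closure_eq ▸ closure_mono h2 h1
  have hcge : ∀ n, a n ≤ c := fun n => le_csSup hrba ⟨n, rfl⟩
  have hcle : ∀ n, c ≤ b n := fun n => csSup_le hrne (by rintro _ ⟨k, rfl⟩; exact hab k n)
  have hmM : sInf (cls c) ∈ M := hminM c hcX
  have hmlec : sInf (cls c) ≤ c := csInf_le (hbb c) ⟨hcX, hrefl c hcX⟩
  have hma : ∀ n, a n < sInf (cls c) := by
    intro n
    by_contra h
    push_neg at h
    have e1 : a n = sInf (cls c) := hsq c hcX (a n) (hinv n).1 h (hcge n)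
    have h2 : sInf (cls c) ≤ a (n + 1) := e1 ▸ (hstep n).1.le
    have e2 : a (n + 1) = sInf (cls c) :=
      hsq c hcX (a (n + 1)) (hinv (n + 1)).1 h2 (hcge (n + 1))
    have := (hstep n).1
    rw [e1, e2] at this
    exact lt_irrefl _ this
  have hmb : ∀ n, sInf (cls c) ≤ b n := fun n => hmlec.trans (hcle n)
  -- contradiction
  obtain ⟨n, hn⟩ := huM _ hmM
  have hfin := (hstep n).2.2 (hn ▸ hmM)
  rw [hn] at hfin
  exact hfin ⟨(hma (n + 1)).le, hmb (n + 1)⟩
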